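/- arXiv:1406.6350 — 6 statements merged into one kernel-verified Lean document; each statement's English description precedes it below -/
import Mathlib

section
/- Let (X,d) be a metric space and let f : X → ℝ be Lipschitz and bounded. Then for every t ≥ 0 the function Q_t f is Lipschitz and bounded, and its Lipschitz constant satisfies Lip(Q_t f) ≤ 2 Lip(f). -/
open Filter MeasureTheory Set Topology

/-- Hopf–Lax formula: `Q_t f (x) = inf_y f(y) + d(x,y)²/(2t)` for `t > 0`, `Q_0 f = f`. -/
noncomputable def hopfLax {X : Type*} [MetricSpace X] (f : X → ℝ) (t : ℝ) (x : X) : ℝ :=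
  if t = 0 then f x else ⨅ y : X, f y + dist x y ^ 2 / (2 * t)

/-- Arithmetic core: one of the two competitor bounds is `≤ 2KD`. -/
lemma hopfLax_arith (Kr t D r : ℝ) (hK : 0 ≤ Kr) (htpos : 0 < t) (hD : 0 ≤ D) (hr : 0 ≤ r) :
    (D ^ 2 + 2 * D * r) / (2 * t) ≤ 2 * Kr * D ∨
      Kr * D + Kr * r - r ^ 2 / (2 * t) ≤ 2 * Kr * D := by
  rcases le_or_gt (D + 2 * r) (4 * Kr * t) with h | h
  · left
    rw [div_le_iff₀ (by linarith : (0:ℝ) < 2 * t)]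
    nlinarith
  · right
    rcases le_or_gt r (2 * Kr * t) with h2 | h2
    · have key : 2 * t * Kr * r - r ^ 2 ≤ 2 * t * Kr * D := by
        nlinarith [mul_nonneg hK htpos.le]
      have h2t : (0:ℝ) < 2 * t := by linarith
      have h6 : Kr * r - Kr * D ≤ r ^ 2 / (2 * t) := by
        rw [le_div_iff₀ h2t]; nlinarith
      linarith
    · have : r ^ 2 / (2 * t) ≥ Kr * r - Kr * D := by
        have h2t : (0:ℝ) < 2 * t := by linarith
        rw [ge_iff_le, sub_le_iff_le_add]
        have : Kr * r ≤ r ^ 2 / (2 * t) := by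
          rw [le_div_iff₀ h2t]
          nlinarith
        nlinarith [mul_nonneg hK hD]
      linarith

/-- If `f : X → ℝ` is Lipschitz (with constant `K`) and bounded, then for every
`t ≥ 0` the function `Q_t f` is Lipschitz with constant at most `2 K`, and bounded. -/
theorem stmt0 {X : Type*} [MetricSpace X] (f : X → ℝ) (K : NNReal)
    (hf : LipschitzWith K f) (hb : ∃ M : ℝ, ∀ x, |f x| ≤ M)
    (t : ℝ) (ht : 0 ≤ t) :
    LipschitzWith (2 * K) (hopfLax f t) ∧ ∃ M : ℝ, ∀ x, |hopfLax f t x| ≤ M := by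
  obtain ⟨M, hM⟩ := hb
  rcases eq_or_lt_of_le ht with rfl | htpos
  · have hQ : hopfLax f 0 = f := by funext x; simp [hopfLax]
    rw [hQ]
    refine ⟨hf.weaken ?_, M, hM⟩
    calc K = 1 * K := (one_mul K).symm
    _ ≤ 2 * K := mul_le_mul_left one_le_two K
  · have hQ : hopfLax f t = fun x => ⨅ y : X, f y + dist x y ^ 2 / (2 * t) := by
      funext x; simp [hopfLax, htpos.ne']
    rw [hQ]
    set Q : X → ℝ := fun x => ⨅ y : X, f y + dist x y ^ 2 / (2 * t) with hQdef
    rcases isEmpty_or_nonempty X with hX | hX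
    · exact ⟨fun x => isEmptyElim x, 0, fun x => isEmptyElim x⟩
    · have hbdd : ∀ x : X, BddBelow (Set.range fun y => f y + dist x y ^ 2 / (2 * t)) := by
        intro x
        refine ⟨-M, ?_⟩
        rintro _ ⟨y, rfl⟩
        have h1 : -M ≤ f y := (abs_le.mp (hM y)).1
        have h2 : (0:ℝ) ≤ dist x y ^ 2 / (2 * t) := by positivity
        linarith
      have hQle : ∀ x : X, Q x ≤ f x := by
        intro x
        have := ciInf_le (hbdd x) x
        simpa using this
      have hQge : ∀ x : X, -M ≤ Q x := by
        intro x
        refine le_ciInf fun y => ?_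
        have h1 : -M ≤ f y := (abs_le.mp (hM y)).1
        have h2 : (0:ℝ) ≤ dist x y ^ 2 / (2 * t) := by positivity
        linarith
      have key : ∀ x x' : X, Q x ≤ Q x' + 2 * (K : ℝ) * dist x x' := by
        intro x x'
        refine le_of_forall_pos_le_add fun ε hε => ?_
        have h1 : Q x' < Q x' + ε := by linarith
        obtain ⟨y, hy⟩ := exists_lt_of_ciInf_lt h1
        set D := dist x x' with hD
        set r := dist x' y with hr
        have hDnn : 0 ≤ D := dist_nonneg
        have hrnn : 0 ≤ r := dist_nonneg
        have hdxy : dist x y ≤ D + r := dist_triangle x x' y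
        have hb1 : Q x ≤ Q x' + ε + (D ^ 2 + 2 * D * r) / (2 * t) := by
          have h2 : Q x ≤ f y + dist x y ^ 2 / (2 * t) := ciInf_le (hbdd x) y
          have h3 : dist x y ^ 2 ≤ (D + r) ^ 2 := by
            nlinarith [dist_nonneg (x := x) (y := y)]
          have h4 : dist x y ^ 2 / (2 * t) ≤ (D + r) ^ 2 / (2 * t) :=
            div_le_div_of_nonneg_right h3 (by linarith) |>.trans_eq rfl
          have h5 : (D + r) ^ 2 / (2 * t) = r ^ 2 / (2 * t) + (D ^ 2 + 2 * D * r) / (2 * t) := by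
            ring
          linarith
        have hb3 : Q x ≤ Q x' + ε + ((K : ℝ) * D + (K : ℝ) * r - r ^ 2 / (2 * t)) := by
          have h2 : Q x ≤ f x := hQle x
          have h4 : f x - f y ≤ (K : ℝ) * dist x y := by
            have := hf.dist_le_mul x y
            rw [Real.dist_eq] at this
            exact (abs_le.mp this).2
          have h5 : (K : ℝ) * dist x y ≤ (K : ℝ) * (D + r) :=
            mul_le_mul_of_nonneg_left hdxy K.2
          linarith
        rcases hopfLax_arith (K : ℝ) t D r K.2 htpos hDnn hrnn with h | h
        · linarith
        · linarith
      constructor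
      · refine LipschitzWith.of_dist_le_mul fun x x' => ?_
        rw [Real.dist_eq, abs_le]
        have h1 := key x x'
        have h2 := key x' x
        rw [dist_comm x' x] at h2
        push_cast
        constructor <;> linarith
      · refine ⟨M, fun x => ?_⟩
        rw [abs_le]
        exact ⟨hQge x, (hQle x).trans (abs_le.mp (hM x)).2⟩
end

section
/- Let (X,d) be a metric space and let f : X → ℝ be Lipschitz and bounded. Then for every x ∈ X the map [0,∞) ∋ t ↦ Q_t f(x) is continuous; in particular Q_t f(x) → f(x) as t ↓ 0. -/
open Filter MeasureTheory Set Topology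

/-- If `f : X → ℝ` is Lipschitz and bounded, then for every `x ∈ X` the map
`[0,∞) ∋ t ↦ Q_t f (x)` is continuous; in particular `Q_t f (x) → f x` as `t ↓ 0`. -/
theorem stmt1 {X : Type*} [MetricSpace X] (f : X → ℝ) (K : NNReal)
    (hf : LipschitzWith K f) (hb : ∃ M : ℝ, ∀ x, |f x| ≤ M) (x : X) :
    ContinuousOn (fun t : ℝ => hopfLax f t x) (Set.Ici 0) ∧
      Tendsto (fun t : ℝ => hopfLax f t x) (𝓝[>] 0) (𝓝 (f x)) := by
  obtain ⟨M, hM⟩ := hb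
  haveI : Nonempty X := ⟨x⟩
  set g : ℝ → X → ℝ := fun t y => f y + dist x y ^ 2 / (2 * t) with hg
  have hbdd : ∀ t : ℝ, 0 < t → BddBelow (Set.range (g t)) := by
    intro t ht
    refine ⟨-M, ?_⟩
    rintro _ ⟨y, rfl⟩
    have h1 : -M ≤ f y := (abs_le.1 (hM y)).1
    have h2 : 0 ≤ dist x y ^ 2 / (2 * t) := by positivity
    simp only [hg]
    linarith
  have hlip : ∀ y : X, f x - f y ≤ (K : ℝ) * dist x y := by
    intro y
    have := hf.dist_le_mul x y
    rw [Real.dist_eq] at this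
    exact (abs_le.1 this).2
  have hQle : ∀ t : ℝ, 0 < t → (⨅ y, g t y) ≤ f x := by
    intro t ht
    have := ciInf_le (hbdd t ht) x
    simpa [hg, dist_self] using this
  have hlb : ∀ t : ℝ, 0 < t → f x - (K : ℝ) ^ 2 * t / 2 ≤ ⨅ y, g t y := by
    intro t ht
    refine le_ciInf fun y => ?_
    have h1 := hlip y
    have h2 : (K : ℝ) * dist x y - (K : ℝ) ^ 2 * t / 2 ≤ dist x y ^ 2 / (2 * t) := by
      rw [le_div_iff₀ (by linarith : (0:ℝ) < 2 * t)]
      nlinarith [sq_nonneg (dist x y - (K : ℝ) * t)]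
    simp only [hg]
    linarith
  -- Key estimate
  have hA : ∀ s t : ℝ, 0 < s → 0 < t →
      (⨅ y, g s y) ≤ (⨅ y, g t y) +
        (max 1 (2 * t * ((K : ℝ) + 1))) ^ 2 * |1 / (2 * s) - 1 / (2 * t)| := by
    intro s t hs ht
    refine le_of_forall_pos_le_add fun ε hε => ?_
    set δ := min ε 1 with hδ
    have hδ0 : 0 < δ := lt_min hε one_pos
    have hδ1 : δ ≤ 1 := min_le_right _ _
    have hδε : δ ≤ ε := min_le_left _ _
    obtain ⟨y, hy⟩ := exists_lt_of_ciInf_lt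
      (show (⨅ y, g t y) < (⨅ y, g t y) + δ by linarith)
    have hQt := hQle t ht
    set d := dist x y with hd
    have hdnn : 0 ≤ d := dist_nonneg
    have hdd : d ^ 2 / (2 * t) < (K : ℝ) * d + δ := by
      have h1 := hlip y
      simp only [hg] at hy
      linarith
    set D := max 1 (2 * t * ((K : ℝ) + 1)) with hD
    have hD1 : (1 : ℝ) ≤ D := le_max_left _ _
    have hD2 : 2 * t * ((K : ℝ) + 1) ≤ D := le_max_right _ _
    have h' : d ^ 2 < ((K : ℝ) * d + δ) * (2 * t) := by
      rwa [div_lt_iff₀ (by linarith : (0:ℝ) < 2 * t)] at hdd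
    have hd2 : d ^ 2 ≤ D ^ 2 := by
      rcases le_or_gt d 1 with h1 | h1
      · nlinarith
      · have hdD : d < D := by nlinarith
        nlinarith
    have step1 : (⨅ y', g s y') ≤ g s y := ciInf_le (hbdd s hs) y
    have step2 : g s y = g t y + d ^ 2 * (1 / (2 * s) - 1 / (2 * t)) := by
      simp only [hg, ← hd]
      field_simp
      ring
    have step3 : d ^ 2 * (1 / (2 * s) - 1 / (2 * t)) ≤ D ^ 2 * |1 / (2 * s) - 1 / (2 * t)| := by
      calc d ^ 2 * (1 / (2 * s) - 1 / (2 * t))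
          ≤ d ^ 2 * |1 / (2 * s) - 1 / (2 * t)| :=
            mul_le_mul_of_nonneg_left (le_abs_self _) (sq_nonneg _)
        _ ≤ D ^ 2 * |1 / (2 * s) - 1 / (2 * t)| :=
            mul_le_mul_of_nonneg_right hd2 (abs_nonneg _)
    have := hy
    simp only [hg] at this step1 step2 ⊢
    linarith [step1, step2.le, step2.ge]
  -- continuity at positive points
  have hcont : ∀ t0 : ℝ, 0 < t0 → ContinuousAt (fun t : ℝ => hopfLax f t x) t0 := by
    intro t0 ht0
    set B : ℝ → ℝ := fun s =>
      ((max 1 (2 * t0 * ((K : ℝ) + 1))) ^ 2 + (max 1 (2 * s * ((K : ℝ) + 1))) ^ 2) *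
        |1 / (2 * s) - 1 / (2 * t0)| with hB
    have hBtendsto : Tendsto B (𝓝 t0) (𝓝 0) := by
      have hc : ContinuousAt B t0 := by
        apply ContinuousAt.mul
        · fun_prop
        · apply ContinuousAt.abs
          apply ContinuousAt.sub
          · exact ContinuousAt.div continuousAt_const (by fun_prop) (by positivity)
          · exact continuousAt_const
      have hB0 : B t0 = 0 := by simp [hB]
      simpa [hB0] using hc.tendsto
    rw [ContinuousAt, tendsto_iff_dist_tendsto_zero]
    refine squeeze_zero' ?_ ?_ hBtendsto
    · exact Eventually.of_forall fun s => dist_nonneg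
    · have hmem : Set.Ioi (0:ℝ) ∈ 𝓝 t0 := isOpen_Ioi.mem_nhds ht0
      filter_upwards [hmem] with s hs
      have hs0 : (0:ℝ) < s := hs
      have e1 : hopfLax f s x = ⨅ y, g s y := by
        simp [hopfLax, hg, hs0.ne']
      have e2 : hopfLax f t0 x = ⨅ y, g t0 y := by
        simp [hopfLax, hg, ht0.ne']
      rw [e1, e2, Real.dist_eq]
      have h1 := hA s t0 hs0 ht0
      have h2 := hA t0 s ht0 hs0
      rw [abs_sub_comm (1 / (2 * t0)) (1 / (2 * s))] at h2
      have hn1 : 0 ≤ (max 1 (2 * t0 * ((K : ℝ) + 1))) ^ 2 * |1 / (2 * s) - 1 / (2 * t0)| := by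
        positivity
      have hn2 : 0 ≤ (max 1 (2 * s * ((K : ℝ) + 1))) ^ 2 * |1 / (2 * s) - 1 / (2 * t0)| := by
        positivity
      rw [abs_le]
      constructor
      · simp only [hB]
        nlinarith [abs_nonneg (1 / (2 * s) - 1 / (2 * t0))]
      · simp only [hB]
        nlinarith [abs_nonneg (1 / (2 * s) - 1 / (2 * t0))]
  -- continuity at 0 from the right
  have h0 : Tendsto (fun t : ℝ => hopfLax f t x) (𝓝[Set.Ici 0] 0) (𝓝 (f x)) := by
    apply tendsto_of_tendsto_of_tendsto_of_le_of_le'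
      (g := fun t : ℝ => f x - (K : ℝ) ^ 2 * t / 2) (h := fun _ : ℝ => f x)
    · have hc : Continuous fun t : ℝ => f x - (K : ℝ) ^ 2 * t / 2 := by fun_prop
      have := hc.tendsto 0
      simp only [mul_zero, zero_div, sub_zero] at this
      exact this.mono_left nhdsWithin_le_nhds
    · exact tendsto_const_nhds
    · filter_upwards [self_mem_nhdsWithin] with t ht
      rcases eq_or_lt_of_le (show (0:ℝ) ≤ t from ht) with h | h
      · simp [hopfLax, ← h]
      · have := hlb t h
        simp only [hopfLax, h.ne']
        simpa using this
    · filter_upwards [self_mem_nhdsWithin] with t ht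
      rcases eq_or_lt_of_le (show (0:ℝ) ≤ t from ht) with h | h
      · simp [hopfLax, ← h]
      · have := hQle t h
        simp only [hopfLax, h.ne']
        simpa using this
  constructor
  · intro t ht
    rcases eq_or_lt_of_le (show (0:ℝ) ≤ t from ht) with h | h
    · subst h
      show Tendsto _ _ _
      have e : (fun t : ℝ => hopfLax f t x) 0 = f x := by simp [hopfLax]
      rw [e]
      exact h0
    · exact (hcont t h).continuousWithinAt
  · exact h0.mono_left (nhdsWithin_mono _ Set.Ioi_subset_Ici_self)
end

section
/- Let (X,d) be a metric space and let f : X → ℝ be Lipschitz and bounded. Then for every x ∈ X the map t ↦ Q_t f(x) is locally semiconcave on (0,∞): for every 0 < a < b there exists a constant C ≥ 0 such that t ↦ Q_t f(x) − C t² is concave on [a,b]. -/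
open Filter MeasureTheory Set Topology

private lemma key_alg (a s t l m r R : ℝ) (ha : 0 < a) (hs : a ≤ s) (ht : a ≤ t)
    (hl : 0 ≤ l) (hm : 0 ≤ m) (hlm : l + m = 1) (hr : 0 ≤ r) (hrR : r ≤ R) :
    l * (r / (2 * s)) + m * (r / (2 * t)) ≤
      r / (2 * (l * s + m * t)) + (R / (2 * a ^ 3)) * (l * s ^ 2 + m * t ^ 2 - (l * s + m * t) ^ 2) := by
  set u := l * s + m * t with hu
  clear_value u
  have hau : a ≤ u := by nlinarith
  have hs0 : 0 < s := lt_of_lt_of_le ha hs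
  have ht0 : 0 < t := lt_of_lt_of_le ha ht
  have hu0 : 0 < u := lt_of_lt_of_le ha hau
  have e1 : l * (r / (2 * s)) + m * (r / (2 * t)) - r / (2 * u) =
      r * (l * m * (s - t) ^ 2) / (2 * (s * t * u)) := by
    have hm' : m = 1 - l := by linarith
    have hup : (0:ℝ) < l * s + (1 - l) * t := by nlinarith
    have hsne : s ≠ 0 := ne_of_gt hs0
    have htne : t ≠ 0 := ne_of_gt ht0
    have hune : l * s + (1 - l) * t ≠ 0 := ne_of_gt hup
    rw [hu, hm']
    field_simp
    ring
  have e2 : l * s ^ 2 + m * t ^ 2 - u ^ 2 = l * m * (s - t) ^ 2 := by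
    have hm' : m = 1 - l := by linarith
    rw [hu, hm']; ring
  have hq : 0 ≤ l * m * (s - t) ^ 2 := by positivity
  have hdiv : r / (2 * (s * t * u)) ≤ R / (2 * a ^ 3) := by
    apply div_le_div₀ (le_trans hr hrR) hrR (by positivity)
    have h1 : a * a ≤ s * t := mul_le_mul hs ht ha.le hs0.le
    have h2 : a * a * a ≤ s * t * u := mul_le_mul h1 hau ha.le (by positivity)
    nlinarith [h2]
  have hmul : l * m * (s - t) ^ 2 * (r / (2 * (s * t * u))) ≤
      l * m * (s - t) ^ 2 * (R / (2 * a ^ 3)) := mul_le_mul_of_nonneg_left hdiv hq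
  have e3 : r * (l * m * (s - t) ^ 2) / (2 * (s * t * u)) =
      l * m * (s - t) ^ 2 * (r / (2 * (s * t * u))) := by ring
  have e4 : R / (2 * a ^ 3) * (l * s ^ 2 + m * t ^ 2 - u ^ 2) =
      l * m * (s - t) ^ 2 * (R / (2 * a ^ 3)) := by rw [e2]; ring
  linarith [e1, hmul, e3, e4]

/-- If `f : X → ℝ` is Lipschitz and bounded then for every `x ∈ X` the map
`t ↦ Q_t f (x)` is locally semiconcave on `(0,∞)`: for every `0 < a < b` there is `C ≥ 0` such
that `t ↦ Q_t f (x) - C t²` is concave on `[a,b]`. -/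
theorem stmt2 {X : Type*} [MetricSpace X] (f : X → ℝ) (K : NNReal)
    (hf : LipschitzWith K f) (hb : ∃ M : ℝ, ∀ x, |f x| ≤ M) (x : X)
    (a b : ℝ) (ha : 0 < a) (hab : a < b) :
    ∃ C : ℝ, 0 ≤ C ∧ ConcaveOn ℝ (Set.Icc a b) (fun t : ℝ => hopfLax f t x - C * t ^ 2) := by
  haveI : Nonempty X := ⟨x⟩
  obtain ⟨M, hM⟩ := hb
  set M' : ℝ := max M 0 with hM'
  clear_value M'
  have hM'0 : 0 ≤ M' := by rw [hM']; exact le_max_right _ _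
  have hfM : ∀ y, -M' ≤ f y ∧ f y ≤ M' := by
    intro y
    have := hM y
    rw [abs_le] at this
    rw [hM']
    constructor
    · linarith [le_max_left M (0:ℝ), this.1]
    · exact this.2.trans (le_max_left _ _)
  set R : ℝ := 2 * b * (2 * M' + 1) with hR
  clear_value R
  have hb0 : 0 < b := ha.trans hab
  have hR0 : 0 ≤ R := by rw [hR]; positivity
  set C : ℝ := R / (2 * a ^ 3) with hC
  clear_value C
  refine ⟨C, by rw [hC]; exact div_nonneg hR0 (by positivity), convex_Icc a b, ?_⟩
  intro s hs t ht l m hl hm hlm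
  simp only [smul_eq_mul]
  -- positivity of times
  have hs0 : 0 < s := ha.trans_le hs.1
  have ht0 : 0 < t := ha.trans_le ht.1
  set u := l * s + m * t with hu
  clear_value u
  have hau : a ≤ u := by nlinarith [hs.1, ht.1]
  have hub : u ≤ b := by nlinarith [hs.2, ht.2]
  have hu0 : 0 < u := ha.trans_le hau
  -- bddBelow lemma
  have hbdd : ∀ τ : ℝ, 0 < τ → BddBelow (Set.range fun y : X => f y + dist x y ^ 2 / (2 * τ)) := by
    intro τ hτ
    refine ⟨-M', ?_⟩
    rintro _ ⟨y, rfl⟩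
    have h1 := (hfM y).1
    have h2 : 0 ≤ dist x y ^ 2 / (2 * τ) := by positivity
    linarith
  have hQ : ∀ τ : ℝ, 0 < τ → hopfLax f τ x = ⨅ y : X, f y + dist x y ^ 2 / (2 * τ) := by
    intro τ hτ; rw [hopfLax, if_neg (ne_of_gt hτ)]
  have hQle : ∀ τ : ℝ, 0 < τ → ∀ y : X,
      hopfLax f τ x ≤ f y + dist x y ^ 2 / (2 * τ) := by
    intro τ hτ y
    rw [hQ τ hτ]
    exact ciInf_le (hbdd τ hτ) y
  -- main inequality via ε
  have main : ∀ ε : ℝ, 0 < ε →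
      l * (hopfLax f s x - C * s ^ 2) + m * (hopfLax f t x - C * t ^ 2) ≤
        (hopfLax f u x - C * u ^ 2) + ε := by
    intro ε hε
    set ε' := min ε 1 with hε'
    clear_value ε'
    have hε'0 : 0 < ε' := hε' ▸ lt_min hε one_pos
    have hε'1 : ε' ≤ 1 := hε' ▸ min_le_right _ _
    have hε'ε : ε' ≤ ε := hε' ▸ min_le_left _ _
    -- pick approximate minimizer at u
    have hlt : hopfLax f u x < hopfLax f u x + ε' := by linarith
    rw [hQ u hu0] at hlt
    obtain ⟨y, hy⟩ := exists_lt_of_ciInf_lt hlt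
    -- y is close: dist x y ^ 2 ≤ R
    have hQux : hopfLax f u x ≤ f x := by
      have := hQle u hu0 x
      simpa using this
    have hQux' : (⨅ y : X, f y + dist x y ^ 2 / (2 * u)) ≤ f x := by
      rw [← hQ u hu0]; exact hQux
    have hdy : dist x y ^ 2 ≤ R := by
      have h1 : f y + dist x y ^ 2 / (2 * u) < f x + ε' :=
        lt_of_lt_of_le hy (by linarith)
      have h2 := (hfM y).1
      have h3 := (hfM x).2
      have h4 : dist x y ^ 2 / (2 * u) < 2 * M' + 1 := by linarith
      have h5 : dist x y ^ 2 < 2 * u * (2 * M' + 1) := by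
        have := (div_lt_iff₀ (by positivity : (0:ℝ) < 2 * u)).mp h4
        linarith [this]
      rw [hR]
      nlinarith [hM'0]
    -- key algebraic inequality
    have key := key_alg a s t l m (dist x y ^ 2) R ha hs.1 ht.1 hl hm hlm (by positivity) hdy
    have hQs := hQle s hs0 y
    have hQt := hQle t ht0 y
    have hfy : l * f y + m * f y = f y := by rw [← add_mul, hlm, one_mul]
    have step : l * (hopfLax f s x - C * s ^ 2) + m * (hopfLax f t x - C * t ^ 2) ≤
        f y + dist x y ^ 2 / (2 * u) - C * u ^ 2 := by
      have expand : l * (f y + dist x y ^ 2 / (2 * s) - C * s ^ 2) +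
          m * (f y + dist x y ^ 2 / (2 * t) - C * t ^ 2) ≤
          f y + dist x y ^ 2 / (2 * u) - C * u ^ 2 := by
        have : l * (f y + dist x y ^ 2 / (2 * s) - C * s ^ 2) +
            m * (f y + dist x y ^ 2 / (2 * t) - C * t ^ 2) =
            f y + (l * (dist x y ^ 2 / (2 * s)) + m * (dist x y ^ 2 / (2 * t)))
              - C * (l * s ^ 2 + m * t ^ 2) := by
          linear_combination f y * hlm
        rw [this, hC]
        rw [← hu] at key
        have dist_eq : R / (2 * a ^ 3) * (l * s ^ 2 + m * t ^ 2 - u ^ 2) =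
            R / (2 * a ^ 3) * (l * s ^ 2 + m * t ^ 2) - R / (2 * a ^ 3) * u ^ 2 := by ring
        linarith [key, dist_eq]
      calc l * (hopfLax f s x - C * s ^ 2) + m * (hopfLax f t x - C * t ^ 2)
          ≤ l * (f y + dist x y ^ 2 / (2 * s) - C * s ^ 2) +
            m * (f y + dist x y ^ 2 / (2 * t) - C * t ^ 2) := by
            apply add_le_add
            · exact mul_le_mul_of_nonneg_left (by linarith) hl
            · exact mul_le_mul_of_nonneg_left (by linarith) hm
        _ ≤ f y + dist x y ^ 2 / (2 * u) - C * u ^ 2 := expand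
    have : f y + dist x y ^ 2 / (2 * u) < hopfLax f u x + ε' := by
      rw [hQ u hu0]; exact hy
    linarith [step, this, hε'ε]
  exact le_of_forall_pos_le_add main
end

section
/- Let ψ : X → ℝ be a bounded function on a metric space (X,d) which is constant equal to c outside some bounded set S ⊂ X. Then there exists a bounded set B ⊂ X such that Q_s ψ(x) = c for every s ∈ (0,1] and every x ∉ B. -/
open Filter MeasureTheory Set Topology

/-- Let `ψ : X → ℝ` be bounded and constant equal to `c` outside a bounded set
`S`. Then there is a bounded set `B` with `Q_s ψ (x) = c` for every `s ∈ (0,1]` and `x ∉ B`. -/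
theorem stmt10 {X : Type*} [MetricSpace X] (ψ : X → ℝ)
    (hb : ∃ M : ℝ, ∀ x, |ψ x| ≤ M)
    (c : ℝ) (S : Set X) (hS : Bornology.IsBounded S) (hc : ∀ x ∉ S, ψ x = c) :
    ∃ B : Set X, Bornology.IsBounded B ∧
      ∀ s ∈ Set.Ioc (0:ℝ) 1, ∀ x ∉ B, hopfLax ψ s x = c := by
  obtain ⟨M, hM⟩ := hb
  cases isEmpty_or_nonempty X with
  | inl h =>
    exact ⟨∅, Bornology.isBounded_empty, fun s hs x hx => (IsEmpty.false x).elim⟩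
  | inr h =>
    obtain ⟨x₀⟩ := h
    haveI : Nonempty X := ⟨x₀⟩
    obtain ⟨r, hr⟩ : ∃ r, S ⊆ Metric.closedBall x₀ r := hS.subset_closedBall x₀
    have hM0 : 0 ≤ M := le_trans (abs_nonneg _) (hM x₀)
    have hMc : 0 ≤ 2 * (M + |c|) := by have := abs_nonneg c; linarith
    set a := Real.sqrt (2 * (M + |c|)) with ha
    have ha0 : 0 ≤ a := Real.sqrt_nonneg _
    refine ⟨Metric.closedBall x₀ (r + a), Metric.isBounded_closedBall, ?_⟩
    rintro s ⟨hs0, hs1⟩ x hx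
    have hxd : r + a < dist x x₀ := by
      simpa [Metric.mem_closedBall, not_le] using hx
    have hxS : x ∉ S := by
      intro hxS
      have := hr hxS
      rw [Metric.mem_closedBall] at this
      linarith
    have hbdd : BddBelow (Set.range fun y => ψ y + dist x y ^ 2 / (2 * s)) := by
      refine ⟨-M, ?_⟩
      rintro _ ⟨y, rfl⟩
      have h1 : -M ≤ ψ y := neg_le_of_abs_le (hM y)
      have h2 : 0 ≤ dist x y ^ 2 / (2 * s) := by positivity
      simp only
      linarith
    have hQ : hopfLax ψ s x = ⨅ y : X, ψ y + dist x y ^ 2 / (2 * s) := by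
      rw [hopfLax, if_neg hs0.ne']
    rw [hQ]
    apply le_antisymm
    · have := ciInf_le hbdd x
      simpa [hc x hxS] using this
    · apply le_ciInf
      intro y
      by_cases hy : y ∈ S
      · have hdy : dist y x₀ ≤ r := by simpa [Metric.mem_closedBall] using hr hy
        have hdxy : a ≤ dist x y := by
          have := dist_triangle x y x₀
          linarith
        have hsq : 2 * (M + |c|) ≤ dist x y ^ 2 := by
          have h2 : a ^ 2 ≤ dist x y ^ 2 := pow_le_pow_left₀ ha0 hdxy 2
          rwa [ha, Real.sq_sqrt hMc] at h2
        have hdiv : dist x y ^ 2 / 2 ≤ dist x y ^ 2 / (2 * s) := by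
          apply div_le_div_of_nonneg_left (by positivity) (by linarith) (by linarith)
        have hcabs : c ≤ |c| := le_abs_self c
        have h1 : -M ≤ ψ y := neg_le_of_abs_le (hM y)
        linarith
      · have h2 : 0 ≤ dist x y ^ 2 / (2 * s) := by positivity
        rw [hc y hy]
        linarith
end

section
/- Let (X,d) be a complete separable metric space, ν a finite Borel measure on X, C > 0, and (μ_n) a sequence of Borel probability measures on X with μ_n ≤ Cν for every n. Assume μ_n converges to a Borel probability measure μ in duality with C_b(X), i.e. ∫ f dμ_n → ∫ f dμ for every bounded continuous f : X → ℝ. Then μ ≤ Cν and ∫ g dμ_n → ∫ g dμ for every bounded Borel function g : X → ℝ. -/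
open Filter MeasureTheory Set Topology

/-- Let `X` be complete separable metric, `ν` a finite Borel measure, `C > 0`,
and `μ_n` Borel probability measures with `μ_n ≤ C ν`, converging to a probability measure `μ` in
duality with `C_b(X)`. Then `μ ≤ C ν` and `∫ g dμ_n → ∫ g dμ` for every bounded Borel `g`. -/
theorem stmt11 {X : Type*} [MetricSpace X] [CompleteSpace X]
    [TopologicalSpace.SeparableSpace X] [MeasurableSpace X] [BorelSpace X]
    (ν : MeasureTheory.Measure X) [MeasureTheory.IsFiniteMeasure ν]
    (C : ℝ) (hC : 0 < C)
    (μ : ℕ → MeasureTheory.Measure X) (hprob : ∀ n, MeasureTheory.IsProbabilityMeasure (μ n))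
    (hle : ∀ n, μ n ≤ ENNReal.ofReal C • ν)
    (μlim : MeasureTheory.Measure X) (hproblim : MeasureTheory.IsProbabilityMeasure μlim)
    (hconv : ∀ f : X → ℝ, Continuous f → (∃ M : ℝ, ∀ x, |f x| ≤ M) →
      Tendsto (fun n => ∫ x, f x ∂ μ n) atTop (𝓝 (∫ x, f x ∂ μlim))) :
    μlim ≤ ENNReal.ofReal C • ν ∧
      ∀ g : X → ℝ, Measurable g → (∃ M : ℝ, ∀ x, |g x| ≤ M) →
        Tendsto (fun n => ∫ x, g x ∂ μ n) atTop (𝓝 (∫ x, g x ∂ μlim)) := by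
  have hCtop : (ENNReal.ofReal C) ≠ ⊤ := ENNReal.ofReal_ne_top
  -- package as probability measures and get weak convergence
  set P : ℕ → ProbabilityMeasure X := fun n => ⟨μ n, hprob n⟩ with hP
  set Q : ProbabilityMeasure X := ⟨μlim, hproblim⟩ with hQ
  have hT : Tendsto P atTop (𝓝 Q) := by
    rw [ProbabilityMeasure.tendsto_iff_forall_integral_tendsto]
    intro f
    exact hconv f f.continuous ⟨‖f‖, fun x => by
      simpa [Real.norm_eq_abs] using f.norm_coe_le_norm x⟩
  -- Part 1 : μlim ≤ C • ν
  have hopen : ∀ U : Set X, IsOpen U → μlim U ≤ (ENNReal.ofReal C • ν) U := by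
    intro U hU
    have h1 : (Q : Measure X) U ≤ atTop.liminf fun n => (P n : Measure X) U :=
      ProbabilityMeasure.le_liminf_measure_open_of_tendsto hT hU
    have h2 : (atTop.liminf fun n => (P n : Measure X) U) ≤ (ENNReal.ofReal C • ν) U :=
      liminf_le_of_frequently_le'
        (Frequently.of_forall fun n => Measure.le_iff'.mp (hle n) U)
    exact h1.trans h2
  haveI : (ENNReal.ofReal C • ν).OuterRegular := MeasureTheory.Measure.OuterRegular.smul ν hCtop
  have part1 : μlim ≤ ENNReal.ofReal C • ν := by
    rw [Measure.le_iff]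
    intro s _
    rw [Set.measure_eq_iInf_isOpen s (ENNReal.ofReal C • ν)]
    refine le_iInf₂ fun U hsU => le_iInf fun hUopen => ?_
    exact (measure_mono hsU).trans (hopen U hUopen)
  refine ⟨part1, ?_⟩
  -- Part 2
  intro g hg hMg
  obtain ⟨M, hM⟩ := hMg
  have hgint : ∀ (ρ : Measure X) [IsFiniteMeasure ρ], Integrable g ρ := by
    intro ρ _
    exact ⟨hg.aestronglyMeasurable,
      HasFiniteIntegral.of_bounded (C := M)
        (ae_of_all _ fun x => by simpa [Real.norm_eq_abs] using hM x)⟩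
  haveI : IsFiniteMeasure (ENNReal.ofReal C • ν) := by
    refine ⟨?_⟩
    rw [Measure.smul_apply, smul_eq_mul]
    exact ENNReal.mul_lt_top hCtop.lt_top (measure_lt_top ν _)
  rw [Metric.tendsto_atTop]
  intro ε hε
  have hε4 : 0 < ε / 4 := by linarith
  have hδpos : 0 < ε / (4 * C) := by positivity
  -- approximate g by a bounded continuous function in L¹(ν)
  obtain ⟨f, hf, _⟩ := (hgint ν).exists_boundedContinuous_lintegral_sub_le
    (ε := ENNReal.ofReal (ε / (4 * C))) (ne_of_gt (ENNReal.ofReal_pos.mpr hδpos))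
  -- key bound for any ρ ≤ C • ν
  have key : ∀ ρ : Measure X, ρ ≤ ENNReal.ofReal C • ν →
      |∫ x, g x ∂ρ - ∫ x, (f : X → ℝ) x ∂ρ| ≤ ε / 4 := by
    intro ρ hρ
    haveI : IsFiniteMeasure ρ := isFiniteMeasure_of_le _ hρ
    have h1 : (∫⁻ x, ‖g x - (f : X → ℝ) x‖₊ ∂ρ) ≤ ENNReal.ofReal (ε / 4) := by
      calc (∫⁻ x, ‖g x - (f : X → ℝ) x‖₊ ∂ρ)
          ≤ ∫⁻ x, ‖g x - (f : X → ℝ) x‖₊ ∂(ENNReal.ofReal C • ν) :=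
            lintegral_mono' hρ le_rfl
        _ = ENNReal.ofReal C * ∫⁻ x, ‖g x - (f : X → ℝ) x‖₊ ∂ν := lintegral_smul_measure _ _
        _ ≤ ENNReal.ofReal C * ENNReal.ofReal (ε / (4 * C)) := by
            exact mul_le_mul_right hf _
        _ = ENNReal.ofReal (C * (ε / (4 * C))) := by
            rw [← ENNReal.ofReal_mul hC.le]
        _ = ENNReal.ofReal (ε / 4) := by
            congr 1; field_simp
    rw [← integral_sub (hgint ρ) (f.integrable ρ), ← Real.norm_eq_abs]
    calc ‖∫ x, (g x - (f : X → ℝ) x) ∂ρ‖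
        ≤ (∫⁻ x, ENNReal.ofReal ‖g x - (f : X → ℝ) x‖ ∂ρ).toReal :=
          norm_integral_le_lintegral_norm _
      _ = (∫⁻ x, ‖g x - (f : X → ℝ) x‖₊ ∂ρ).toReal := by
          congr 1; exact lintegral_congr fun x => ofReal_norm _
      _ ≤ (ENNReal.ofReal (ε / 4)).toReal :=
          ENNReal.toReal_mono ENNReal.ofReal_ne_top h1
      _ = ε / 4 := ENNReal.toReal_ofReal hε4.le
  -- convergence of the integrals of f
  have hmid : Tendsto (fun n => ∫ x, (f : X → ℝ) x ∂μ n) atTop (𝓝 (∫ x, (f : X → ℝ) x ∂μlim)) :=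
    hconv f f.continuous ⟨‖f‖, fun x => by simpa [Real.norm_eq_abs] using f.norm_coe_le_norm x⟩
  obtain ⟨N, hN⟩ := Metric.tendsto_atTop.mp hmid (ε / 4) hε4
  refine ⟨N, fun n hn => ?_⟩
  have h1 := key (μ n) (hle n)
  have h2 := key μlim part1
  have h3 := hN n hn
  rw [Real.dist_eq] at h3 ⊢
  have tri : |∫ x, g x ∂μ n - ∫ x, g x ∂μlim| ≤
      |∫ x, g x ∂μ n - ∫ x, (f : X → ℝ) x ∂μ n| +
      |∫ x, (f : X → ℝ) x ∂μ n - ∫ x, (f : X → ℝ) x ∂μlim| +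
      |∫ x, (f : X → ℝ) x ∂μlim - ∫ x, g x ∂μlim| := by
    have := abs_sub_le (∫ x, g x ∂μ n) (∫ x, (f : X → ℝ) x ∂μ n) (∫ x, g x ∂μlim)
    have := abs_sub_le (∫ x, (f : X → ℝ) x ∂μ n) (∫ x, (f : X → ℝ) x ∂μlim) (∫ x, g x ∂μlim)
    linarith [abs_sub_le (∫ x, g x ∂μ n) (∫ x, (f : X → ℝ) x ∂μ n) (∫ x, g x ∂μlim),
      abs_sub_le (∫ x, (f : X → ℝ) x ∂μ n) (∫ x, (f : X → ℝ) x ∂μlim) (∫ x, g x ∂μlim)]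
  have h2' : |∫ x, (f : X → ℝ) x ∂μlim - ∫ x, g x ∂μlim| ≤ ε / 4 := by
    rw [abs_sub_comm]; exact h2
  linarith
end

section
/- Let (X,d) be a metric space and let γ : [0,1] → X be an absolutely continuous curve. Then for a.e. t ∈ [0,1] the limit |γ̇_t| := lim_{h→0} d(γ_{t+h},γ_t)/|h| exists; the function t ↦ |γ̇_t| belongs to L¹(0,1), satisfies d(γ_t,γ_s) ≤ ∫_t^s |γ̇_r| dr for all t < s, and is minimal in the a.e. sense among admissible integrands: for every f ∈ L¹(0,1) with d(γ_s,γ_t) ≤ ∫_t^s f(r) dr for all t < s, one has |γ̇_t| ≤ f(t) for a.e. t. -/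
open Filter MeasureTheory Set Topology
open scoped ENNReal NNReal Classical

/-- The metric speed of a curve `γ` at time `t`: the limit of `d(γ s, γ t)/|s - t|` as `s → t`,
if it exists (and `0` otherwise). -/
noncomputable def metricSpeed {X : Type*} [MetricSpace X] (γ : ℝ → X) (t : ℝ) : ℝ :=
  if h : ∃ L : ℝ, Tendsto (fun s => dist (γ s) (γ t) / |s - t|) (𝓝[≠] t) (𝓝 L) then h.choose
  else 0

/-- `γ : [0,1] → X` is absolutely continuous: there is `f ∈ L¹(0,1)` with
`d(γ_t, γ_s) ≤ ∫_t^s f` for all `0 ≤ t ≤ s ≤ 1`. -/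
def IsAC {X : Type*} [MetricSpace X] (γ : ℝ → X) : Prop :=
  ∃ f : ℝ → ℝ, (∀ t, 0 ≤ f t) ∧ IntegrableOn f (Set.Icc 0 1) ∧
    ∀ t s : ℝ, 0 ≤ t → t ≤ s → s ≤ 1 → dist (γ t) (γ s) ≤ ∫ r in t..s, f r

/-- Lebesgue differentiation: a.e. point is a "Lebesgue point" of an integrable function,
in the strong sense that difference quotients of the primitive converge from both sides. -/
lemma ms_lebesgue_points {h : ℝ → ℝ} (hh : Integrable h (volume : Measure ℝ)) :
    ∀ᵐ t : ℝ ∂volume, Tendsto (fun s => (∫ u in t..s, h u) / (s - t)) (𝓝[≠] t) (𝓝 (h t)) := by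
  filter_upwards [IsUnifLocDoublingMeasure.ae_tendsto_average_norm_sub (volume : Measure ℝ)
    hh.locallyIntegrable 1] with t ht
  have hδ : Tendsto (fun s : ℝ => |s - t|) (𝓝[≠] t) (𝓝[>] 0) := by
    rw [tendsto_nhdsWithin_iff]
    constructor
    · have : Tendsto (fun s : ℝ => |s - t|) (𝓝 t) (𝓝 |t - t|) :=
        ((continuous_id.sub continuous_const).abs).tendsto t
      simpa using this.mono_left nhdsWithin_le_nhds
    · filter_upwards [self_mem_nhdsWithin] with s hs
      exact abs_pos.2 (sub_ne_zero.2 hs)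
  have key : Tendsto (fun s : ℝ => ⨍ y in Metric.closedBall t |s - t|, ‖h y - h t‖)
      (𝓝[≠] t) (𝓝 0) := by
    apply ht (fun _ => t) (fun s => |s - t|) hδ
    filter_upwards with s
    exact Metric.mem_closedBall_self (by positivity)
  rw [tendsto_iff_dist_tendsto_zero]
  have key2 : Tendsto (fun s : ℝ => 2 * ⨍ y in Metric.closedBall t |s - t|, ‖h y - h t‖)
      (𝓝[≠] t) (𝓝 0) := by simpa using key.const_mul 2
  apply squeeze_zero' (Eventually.of_forall fun s => dist_nonneg) _ key2
  filter_upwards [self_mem_nhdsWithin] with s hs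
  have hst : s - t ≠ 0 := sub_ne_zero.2 hs
  have habs : (0:ℝ) < |s - t| := abs_pos.2 hst
  have hii : IntervalIntegrable h volume t s := hh.intervalIntegrable
  have hsub : IntegrableOn (fun y => h y - h t) (Metric.closedBall t |s - t|) volume :=
    hh.integrableOn.sub (integrableOn_const measure_closedBall_lt_top.ne)
  have e1 : (∫ u in t..s, h u) / (s - t) - h t
      = (∫ u in t..s, (h u - h t)) / (s - t) := by
    rw [intervalIntegral.integral_sub hii intervalIntegrable_const]
    rw [intervalIntegral.integral_const, smul_eq_mul]
    field_simp
  have e2 : ‖∫ u in t..s, (h u - h t)‖ ≤ ∫ y in Set.uIoc t s, ‖h y - h t‖ :=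
    intervalIntegral.norm_integral_le_integral_norm_uIoc
  have e3 : ∫ y in Set.uIoc t s, ‖h y - h t‖
      ≤ ∫ y in Metric.closedBall t |s - t|, ‖h y - h t‖ := by
    apply setIntegral_mono_set hsub.norm
      (Eventually.of_forall fun y => norm_nonneg _)
    apply Eventually.of_forall
    intro y hy
    have hmem : dist y t ≤ |s - t| := by
      rcases le_total t s with hts | hts
      · rw [uIoc_of_le hts] at hy
        rw [Real.dist_eq, abs_of_nonneg (by linarith [hy.1, hy.2] : (0:ℝ) ≤ y - t),
          abs_of_nonneg (by linarith : (0:ℝ) ≤ s - t)]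
        linarith [hy.2]
      · rw [uIoc_of_ge hts] at hy
        rw [Real.dist_eq, abs_of_nonpos (by linarith [hy.1, hy.2] : y - t ≤ 0),
          abs_of_nonpos (by linarith : s - t ≤ 0)]
        linarith [hy.1]
    exact Metric.mem_closedBall.2 hmem
  have e4 : ∫ y in Metric.closedBall t |s - t|, ‖h y - h t‖
      = (2 * |s - t|) * ⨍ y in Metric.closedBall t |s - t|, ‖h y - h t‖ := by
    rw [setAverage_eq, Real.volume_real_closedBall (by positivity)]
    rw [smul_eq_mul, ← mul_assoc, mul_inv_cancel₀ (by positivity), one_mul]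
  rw [Real.dist_eq, e1, abs_div]
  have e5 : |∫ u in t..s, (h u - h t)| ≤ ∫ y in Metric.closedBall t |s - t|, ‖h y - h t‖ := by
    rw [← Real.norm_eq_abs]
    exact e2.trans e3
  rw [div_le_iff₀ habs]
  calc |∫ u in t..s, (h u - h t)|
      ≤ (2 * |s - t|) * ⨍ y in Metric.closedBall t |s - t|, ‖h y - h t‖ := e5.trans_eq e4
    _ = (2 * ⨍ y in Metric.closedBall t |s - t|, ‖h y - h t‖) * |s - t| := by ring

lemma ms_stieltjes_integrableOn (S : StieltjesFunction ℝ) (t s : ℝ) :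
    IntegrableOn (fun u => (S.measure.rnDeriv volume u).toReal) (Ioc t s) volume := by
  apply integrable_toReal_of_lintegral_ne_top (Measure.measurable_rnDeriv _ _).aemeasurable
  exact ((Measure.setLIntegral_rnDeriv_le _).trans_lt
    (by rw [S.measure_Ioc]; exact ENNReal.ofReal_lt_top)).ne

lemma ms_stieltjes_integral_deriv_le (S : StieltjesFunction ℝ) {t s : ℝ} (hts : t ≤ s) :
    ∫ u in Ioc t s, (S.measure.rnDeriv volume u).toReal ≤ S s - S t := by
  have hmeas : Measurable (S.measure.rnDeriv volume) := Measure.measurable_rnDeriv _ _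
  have hlt : ∀ᵐ u ∂(volume.restrict (Ioc t s)), S.measure.rnDeriv volume u < ∞ :=
    ae_restrict_of_ae (Measure.rnDeriv_lt_top _ _)
  rw [integral_toReal hmeas.aemeasurable hlt]
  have h1 : ∫⁻ u in Ioc t s, S.measure.rnDeriv volume u ∂volume ≤ S.measure (Ioc t s) :=
    Measure.setLIntegral_rnDeriv_le _
  have h2 : S.measure (Ioc t s) = ENNReal.ofReal (S s - S t) := S.measure_Ioc t s
  calc (∫⁻ u in Ioc t s, S.measure.rnDeriv volume u ∂volume).toReal
      ≤ (ENNReal.ofReal (S s - S t)).toReal :=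
        ENNReal.toReal_mono ENNReal.ofReal_ne_top (h2 ▸ h1)
    _ ≤ S s - S t := by
        rw [ENNReal.toReal_ofReal']
        exact max_le (le_refl _) (sub_nonneg.2 (S.mono hts))

/-- For an absolutely continuous curve `γ : [0,1] → X`, the metric speed
`|γ̇_t| = lim_{h→0} d(γ_{t+h},γ_t)/|h|` exists for a.e. `t ∈ [0,1]`; it belongs to `L¹(0,1)`,
satisfies `d(γ_t,γ_s) ≤ ∫_t^s |γ̇_r| dr` for all `t ≤ s`, and is a.e. minimal among the
admissible integrands `f` in the definition of absolute continuity. -/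
theorem stmt14 {X : Type*} [MetricSpace X] (γ : ℝ → X) (hγ : IsAC γ) :
    (∀ᵐ t ∂(MeasureTheory.volume.restrict (Set.Ioo (0:ℝ) 1)),
      ∃ L : ℝ, Tendsto (fun s => dist (γ s) (γ t) / |s - t|) (𝓝[≠] t) (𝓝 L)) ∧
    IntegrableOn (metricSpeed γ) (Set.Icc 0 1) ∧
    (∀ t s : ℝ, 0 ≤ t → t ≤ s → s ≤ 1 → dist (γ t) (γ s) ≤ ∫ r in t..s, metricSpeed γ r) ∧
    (∀ f : ℝ → ℝ, IntegrableOn f (Set.Icc 0 1) →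
      (∀ t s : ℝ, 0 ≤ t → t ≤ s → s ≤ 1 → dist (γ t) (γ s) ≤ ∫ r in t..s, f r) →
      ∀ᵐ t ∂(MeasureTheory.volume.restrict (Set.Ioo (0:ℝ) 1)), metricSpeed γ t ≤ f t) := by
  classical
  obtain ⟨f0, hf0_nonneg, hf0_int, hf0⟩ := hγ
  -- the clamped reparametrization
  set c : ℝ → ℝ := fun u => max 0 (min 1 u) with hc_def
  have hc_mem : ∀ u, c u ∈ Icc (0:ℝ) 1 := fun u =>
    ⟨le_max_left _ _, max_le zero_le_one (min_le_left _ _)⟩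
  have hc_id : ∀ u ∈ Icc (0:ℝ) 1, c u = u := by
    intro u hu
    simp only [hc_def]
    rw [min_eq_right hu.2, max_eq_right hu.1]
  set γe : ℝ → X := fun u => γ (c u) with hγe_def
  have hγe_eq : ∀ u ∈ Icc (0:ℝ) 1, γe u = γ u := fun u hu => by
    simp only [hγe_def]; rw [hc_id u hu]
  set fe : ℝ → ℝ := (Icc (0:ℝ) 1).indicator f0 with hfe_def
  have hfe_nonneg : ∀ u, 0 ≤ fe u := fun u =>
    Set.indicator_nonneg (fun v _ => hf0_nonneg v) u
  have hfe_int : Integrable fe (volume : Measure ℝ) :=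
    (integrable_indicator_iff measurableSet_Icc).2 hf0_int
  have hfe_ii : ∀ a b : ℝ, IntervalIntegrable fe volume a b :=
    fun a b => hfe_int.intervalIntegrable
  set F : ℝ → ℝ := fun u => ∫ v in (0:ℝ)..u, fe v with hF_def
  have hF_sub : ∀ a b : ℝ, F b - F a = ∫ v in a..b, fe v := by
    intro a b
    have := intervalIntegral.integral_add_adjacent_intervals (hfe_ii 0 a) (hfe_ii a b)
    simp only [hF_def]
    linarith [this]
  have hF_mono : Monotone F := by
    intro a b hab
    have h1 : F b - F a = ∫ v in a..b, fe v := hF_sub a b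
    have h2 : 0 ≤ ∫ v in a..b, fe v :=
      intervalIntegral.integral_nonneg hab fun u _ => hfe_nonneg u
    linarith
  have hF_cont : Continuous F := intervalIntegral.continuous_primitive hfe_ii 0
  -- the basic AC estimate, globally
  have key_ac : ∀ t s : ℝ, t ≤ s → dist (γe t) (γe s) ≤ F s - F t := by
    intro t s hts
    have hcts : c t ≤ c s := by
      simp only [hc_def]
      exact max_le_max (le_refl 0) (min_le_min (le_refl 1) hts)
    have h1 : dist (γe t) (γe s) ≤ ∫ r in c t..c s, f0 r :=
      hf0 (c t) (c s) (hc_mem t).1 hcts (hc_mem s).2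
    have h2 : ∫ r in c t..c s, f0 r = ∫ r in c t..c s, fe r := by
      apply intervalIntegral.integral_congr
      intro u hu
      rw [uIcc_of_le hcts] at hu
      have hu' : u ∈ Icc (0:ℝ) 1 := ⟨le_trans (hc_mem t).1 hu.1, le_trans hu.2 (hc_mem s).2⟩
      simp only [hfe_def]
      rw [indicator_of_mem hu']
    have h3 : ∫ r in c t..c s, fe r = F (c s) - F (c t) := (hF_sub (c t) (c s)).symm
    -- F ∘ c = F
    have hFc : ∀ u : ℝ, F (c u) = F u := by
      intro u
      rcases le_or_gt u 0 with hu | hu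
      · have hcu : c u = 0 := by
          simp only [hc_def]
          rw [max_eq_left]
          exact le_trans (min_le_right _ _) hu
        rw [hcu]
        have hz : F 0 - F u = ∫ v in u..(0:ℝ), fe v := hF_sub u 0
        have : ∫ v in u..(0:ℝ), fe v = 0 := by
          rw [intervalIntegral.integral_of_le hu]
          rw [setIntegral_indicator measurableSet_Icc]
          have hsub : Ioc u 0 ∩ Icc (0:ℝ) 1 ⊆ {(0:ℝ)} := by
            rintro v ⟨hv1, hv2⟩
            exact le_antisymm hv1.2 hv2.1
          have : volume (Ioc u 0 ∩ Icc (0:ℝ) 1) = 0 :=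
            measure_mono_null hsub (measure_singleton 0)
          rw [show volume.restrict (Ioc u 0 ∩ Icc (0:ℝ) 1) = 0 from
            Measure.restrict_eq_zero.2 this]
          exact integral_zero_measure _
        linarith
      · rcases le_or_gt u 1 with hu1 | hu1
        · rw [hc_id u ⟨hu.le, hu1⟩]
        · have hcu : c u = 1 := by
            simp only [hc_def]
            rw [min_eq_left hu1.le]
            exact max_eq_right zero_le_one
          rw [hcu]
          have hz : F u - F 1 = ∫ v in (1:ℝ)..u, fe v := hF_sub 1 u
          have : ∫ v in (1:ℝ)..u, fe v = 0 := by
            rw [intervalIntegral.integral_of_le hu1.le]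
            rw [setIntegral_indicator measurableSet_Icc]
            have hsub : Ioc 1 u ∩ Icc (0:ℝ) 1 ⊆ (∅ : Set ℝ) := by
              rintro v ⟨hv1, hv2⟩
              exact absurd hv2.2 (not_le.2 hv1.1)
            have : volume (Ioc 1 u ∩ Icc (0:ℝ) 1) = 0 :=
              measure_mono_null hsub (by simp)
            rw [show volume.restrict (Ioc 1 u ∩ Icc (0:ℝ) 1) = 0 from
              Measure.restrict_eq_zero.2 this]
            exact integral_zero_measure _
          linarith
    calc dist (γe t) (γe s) ≤ F (c s) - F (c t) := by rw [← h3, ← h2]; exact h1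
      _ = F s - F t := by rw [hFc, hFc]
  have hdist_le : ∀ t s : ℝ, dist (γe s) (γe t) ≤ |F s - F t| := by
    intro t s
    rcases le_total t s with h | h
    · rw [dist_comm]
      exact (key_ac t s h).trans (le_abs_self _)
    · refine (key_ac s t h).trans ?_
      rw [abs_sub_comm]
      exact le_abs_self _
  have hγe_cont : Continuous γe := by
    rw [continuous_iff_continuousAt]
    intro t
    rw [ContinuousAt, tendsto_iff_dist_tendsto_zero]
    apply squeeze_zero (fun s => dist_nonneg) (fun s => hdist_le t s)
    have : Tendsto (fun s => |F s - F t|) (𝓝 t) (𝓝 |F t - F t|) :=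
      ((hF_cont.sub continuous_const).abs).tendsto t
    simpa using this
  -- a countable dense family in the image of the curve
  have hK : IsCompact (γe '' Icc 0 1) := isCompact_Icc.image hγe_cont
  obtain ⟨cs, hcs_count, hcs_sub⟩ := hK.isSeparable
  obtain ⟨x, hx⟩ := (hcs_count.insert (γe 0)).exists_eq_range (insert_nonempty _ _)
  have hx_dense : ∀ u : ℝ, γe u ∈ closure (range x) := by
    intro u
    have h1 : γe u ∈ γe '' Icc 0 1 := by
      refine ⟨c u, hc_mem u, ?_⟩
      simp only [hγe_def]
      rw [hc_id (c u) (hc_mem u)]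
    rw [← hx]
    exact closure_mono (subset_insert _ _) (hcs_sub h1)
  -- the distance functions and associated monotone functions
  set dn : ℕ → ℝ → ℝ := fun n u => dist (γe u) (x n) with hdn_def
  have hdn_diff_le : ∀ n t s, |dn n s - dn n t| ≤ dist (γe s) (γe t) :=
    fun n t s => abs_dist_sub_le _ _ _
  have hφ_mono : ∀ n, Monotone fun u => F u - dn n u := by
    intro n a b hab
    have h1 : dn n b - dn n a ≤ dist (γe b) (γe a) :=
      (le_abs_self _).trans (hdn_diff_le n a b)
    have h2 := key_ac a b hab
    rw [dist_comm] at h2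
    simp only
    linarith
  have hψ_mono : ∀ n, Monotone fun u => F u + dn n u := by
    intro n a b hab
    have h1 : dn n a - dn n b ≤ dist (γe b) (γe a) := by
      have := (neg_abs_le (dn n b - dn n a)).trans_eq rfl
      have h2 := hdn_diff_le n a b
      linarith [neg_le_neg h2, neg_abs_le (dn n b - dn n a), le_abs_self (dn n a - dn n b),
        abs_sub_comm (dn n b) (dn n a) ▸ (le_abs_self (dn n a - dn n b))]
    have h2 := key_ac a b hab
    rw [dist_comm] at h2
    simp only
    linarith
  have hdn_cont : ∀ n, Continuous (dn n) := fun n => hγe_cont.dist continuous_const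
  set Sφ : ℕ → StieltjesFunction ℝ := fun n =>
    { toFun := fun u => F u - dn n u
      mono' := hφ_mono n
      right_continuous' := fun z =>
        ((hF_cont.sub (hdn_cont n)).continuousAt).continuousWithinAt } with hSφ_def
  set Sψ : ℕ → StieltjesFunction ℝ := fun n =>
    { toFun := fun u => F u + dn n u
      mono' := hψ_mono n
      right_continuous' := fun z =>
        ((hF_cont.add (hdn_cont n)).continuousAt).continuousWithinAt } with hSψ_def
  set A : ℕ → ℝ → ℝ := fun n u => ((Sφ n).measure.rnDeriv volume u).toReal with hA_def
  set B : ℕ → ℝ → ℝ := fun n u => ((Sψ n).measure.rnDeriv volume u).toReal with hB_def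
  -- almost-everywhere differentiability package
  have hDer : ∀ᵐ u : ℝ ∂volume, ∀ n,
      HasDerivAt (fun v => F v - dn n v) (A n u) u ∧
      HasDerivAt (fun v => F v + dn n v) (B n u) u := by
    rw [ae_all_iff]
    intro n
    exact ((Sφ n).ae_hasDerivAt).and ((Sψ n).ae_hasDerivAt)
  have hLebfe := ms_lebesgue_points hfe_int
  have hE0 : ∀ᵐ t : ℝ ∂volume,
      (∀ n, HasDerivAt (dn n) (deriv (dn n) t) t ∧
        A n t = fe t - deriv (dn n) t ∧ B n t = fe t + deriv (dn n) t) ∧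
      (∀ n, |deriv (dn n) t| ≤ fe t) := by
    filter_upwards [hDer, hLebfe] with t hder hleb
    have hF_t : HasDerivAt F (fe t) t := by
      rw [hasDerivAt_iff_tendsto_slope]
      apply hleb.congr
      intro s
      rw [slope_def_field, ← hF_sub t s]
    have hmain : ∀ n, HasDerivAt (dn n) (deriv (dn n) t) t ∧
        A n t = fe t - deriv (dn n) t ∧ B n t = fe t + deriv (dn n) t ∧
        |deriv (dn n) t| ≤ fe t := by
      intro n
      have hdn1 : HasDerivAt (dn n) (fe t - A n t) t := by
        have h := hF_t.sub (hder n).1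
        simpa [Pi.sub_def] using h
      have hdn2 : HasDerivAt (dn n) (B n t - fe t) t := by
        have h := (hder n).2.sub hF_t
        simpa [Pi.sub_def] using h
      have huniq : fe t - A n t = B n t - fe t := hdn1.unique hdn2
      have hderiv : deriv (dn n) t = fe t - A n t := hdn1.deriv
      have hA_nonneg : 0 ≤ A n t := ENNReal.toReal_nonneg
      have hB_nonneg : 0 ≤ B n t := ENNReal.toReal_nonneg
      refine ⟨hderiv ▸ hdn1, by linarith, by linarith, ?_⟩
      rw [abs_le]
      constructor <;> [linarith; linarith]
    exact ⟨fun n => ⟨(hmain n).1, (hmain n).2.1, (hmain n).2.2.1⟩, fun n => (hmain n).2.2.2⟩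
  -- the candidate speed
  set g : ℝ → ℝ := fun t => (⨆ n, (‖deriv (dn n) t‖₊ : ℝ≥0∞)).toReal with hg_def
  have hg_nonneg : ∀ t, 0 ≤ g t := fun t => ENNReal.toReal_nonneg
  have hg_meas : Measurable g := by
    apply ENNReal.measurable_toReal.comp
    exact Measurable.iSup fun n => (measurable_deriv (dn n)).nnnorm.coe_nnreal_ennreal
  -- pointwise facts on the good set
  have hg_facts : ∀ t : ℝ, (∀ n, |deriv (dn n) t| ≤ fe t) →
      g t ≤ fe t ∧ ∀ n, |deriv (dn n) t| ≤ g t := by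
    intro t ht
    have hGle : (⨆ n, (‖deriv (dn n) t‖₊ : ℝ≥0∞)) ≤ ENNReal.ofReal (fe t) := by
      apply iSup_le
      intro n
      rw [← enorm_eq_nnnorm, Real.enorm_eq_ofReal_abs]
      exact ENNReal.ofReal_le_ofReal (ht n)
    have hG_ne : (⨆ n, (‖deriv (dn n) t‖₊ : ℝ≥0∞)) ≠ ∞ :=
      (hGle.trans_lt ENNReal.ofReal_lt_top).ne
    constructor
    · have := ENNReal.toReal_mono ENNReal.ofReal_ne_top hGle
      rwa [ENNReal.toReal_ofReal (hfe_nonneg t)] at this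
    · intro n
      have h1 : (‖deriv (dn n) t‖₊ : ℝ≥0∞) ≤ ⨆ m, (‖deriv (dn m) t‖₊ : ℝ≥0∞) :=
        le_iSup (fun m => (‖deriv (dn m) t‖₊ : ℝ≥0∞)) n
      have h2 := ENNReal.toReal_mono hG_ne h1
      rwa [← enorm_eq_nnnorm, Real.enorm_eq_ofReal_abs, ENNReal.toReal_ofReal (abs_nonneg _)] at h2
  have hg_int : Integrable g (volume : Measure ℝ) := by
    apply hfe_int.mono' hg_meas.aestronglyMeasurable
    filter_upwards [hE0] with t ht
    rw [Real.norm_eq_abs, abs_of_nonneg (hg_nonneg t)]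
    exact (hg_facts t ht.2).1
  -- the key FTC-type inequality for each distance function
  have key1 : ∀ (n : ℕ) (t s : ℝ), t ≤ s → |dn n s - dn n t| ≤ ∫ u in Ioc t s, g u := by
    intro n t s hts
    have hAint : IntegrableOn (A n) (Ioc t s) volume := ms_stieltjes_integrableOn (Sφ n) t s
    have hBint : IntegrableOn (B n) (Ioc t s) volume := ms_stieltjes_integrableOn (Sψ n) t s
    have hfeInt : IntegrableOn fe (Ioc t s) volume := hfe_int.integrableOn
    have hgInt : IntegrableOn g (Ioc t s) volume := hg_int.integrableOn
    have e_fe : ∫ u in Ioc t s, fe u = F s - F t := by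
      rw [hF_sub t s, intervalIntegral.integral_of_le hts]
    have hΔ1 : ∫ u in Ioc t s, A n u ≤ (F s - dn n s) - (F t - dn n t) :=
      ms_stieltjes_integral_deriv_le (Sφ n) hts
    have hΔ2 : ∫ u in Ioc t s, B n u ≤ (F s + dn n s) - (F t + dn n t) :=
      ms_stieltjes_integral_deriv_le (Sψ n) hts
    have hptA : ∀ᵐ u ∂(volume.restrict (Ioc t s)), fe u - A n u ≤ g u := by
      apply ae_restrict_of_ae
      filter_upwards [hE0] with u hu
      have h1 := (hu.1 n).2.1
      have h2 := (hg_facts u hu.2).2 n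
      have h3 := le_abs_self (deriv (dn n) u)
      linarith
    have hptB : ∀ᵐ u ∂(volume.restrict (Ioc t s)), fe u - B n u ≤ g u := by
      apply ae_restrict_of_ae
      filter_upwards [hE0] with u hu
      have h1 := (hu.1 n).2.2
      have h2 := (hg_facts u hu.2).2 n
      have h3 := neg_abs_le (deriv (dn n) u)
      linarith
    have upA : dn n s - dn n t ≤ ∫ u in Ioc t s, g u := by
      have h1 : ∫ u in Ioc t s, (fe u - A n u) ≤ ∫ u in Ioc t s, g u :=
        integral_mono_ae (hfeInt.sub hAint) hgInt hptA
      rw [integral_sub hfeInt hAint, e_fe] at h1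
      linarith
    have upB : dn n t - dn n s ≤ ∫ u in Ioc t s, g u := by
      have h1 : ∫ u in Ioc t s, (fe u - B n u) ≤ ∫ u in Ioc t s, g u :=
        integral_mono_ae (hfeInt.sub hBint) hgInt hptB
      rw [integral_sub hfeInt hBint, e_fe] at h1
      linarith
    rw [abs_sub_le_iff]
    exact ⟨upA, upB⟩
  -- the curve inequality with integrand `g`
  have key2 : ∀ t s : ℝ, t ≤ s → dist (γe t) (γe s) ≤ ∫ u in Ioc t s, g u := by
    intro t s hts
    apply le_of_forall_pos_le_add
    intro ε hε
    obtain ⟨b, hb_mem, hb⟩ := Metric.mem_closure_iff.1 (hx_dense s) (ε / 2) (by linarith)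
    obtain ⟨n, rfl⟩ := hb_mem
    have h1 : dist (γe t) (γe s) ≤ dn n t + dist (γe s) (x n) := by
      have := dist_triangle (γe t) (x n) (γe s)
      simp only [hdn_def]
      rw [dist_comm (x n) (γe s)] at this
      linarith
    have h2 : dn n t ≤ dn n s + |dn n s - dn n t| := by
      have := le_abs_self (dn n t - dn n s)
      have h3 := abs_sub_comm (dn n t) (dn n s)
      linarith [le_abs_self (dn n t - dn n s), abs_sub_comm (dn n t) (dn n s) ▸
        le_abs_self (dn n t - dn n s)]
    have h3 : dn n s = dist (γe s) (x n) := rfl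
    have h4 := key1 n t s hts
    calc dist (γe t) (γe s) ≤ dn n t + dist (γe s) (x n) := h1
      _ ≤ (dn n s + |dn n s - dn n t|) + dist (γe s) (x n) := by linarith
      _ ≤ (∫ u in Ioc t s, g u) + ε := by
          rw [h3]
          linarith [hb]
  -- Lebesgue points of g
  have hLebg := ms_lebesgue_points hg_int
  -- main pointwise limit statement for γe
  have hmain : ∀ᵐ t : ℝ ∂volume,
      Tendsto (fun s => dist (γe s) (γe t) / |s - t|) (𝓝[≠] t) (𝓝 (g t)) := by
    filter_upwards [hE0, hLebg] with t ht hQ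
    rw [Metric.tendsto_nhds]
    intro ε hε
    have hQ' := (Metric.tendsto_nhds.1 hQ) ε hε
    -- choose a good index n
    obtain ⟨n, hn⟩ : ∃ n, g t - ε < |deriv (dn n) t| := by
      rcases lt_or_ge (g t) ε with h | h
      · exact ⟨0, lt_of_lt_of_le (by linarith) (abs_nonneg _)⟩
      · have hGle : (⨆ m, (‖deriv (dn m) t‖₊ : ℝ≥0∞)) ≤ ENNReal.ofReal (fe t) := by
          apply iSup_le
          intro m
          rw [← enorm_eq_nnnorm, Real.enorm_eq_ofReal_abs]
          exact ENNReal.ofReal_le_ofReal (ht.2 m)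
        have hG_ne : (⨆ m, (‖deriv (dn m) t‖₊ : ℝ≥0∞)) ≠ ∞ :=
          (hGle.trans_lt ENNReal.ofReal_lt_top).ne
        have h1 : ENNReal.ofReal (g t - ε) < ⨆ m, (‖deriv (dn m) t‖₊ : ℝ≥0∞) := by
          rw [ENNReal.ofReal_lt_iff_lt_toReal (by linarith) hG_ne]
          simp only [hg_def]
          linarith
        obtain ⟨n, hn⟩ := lt_iSup_iff.1 h1
        refine ⟨n, ?_⟩
        have h2 := ENNReal.toReal_strict_mono ENNReal.coe_ne_top hn
        rwa [ENNReal.toReal_ofReal (by linarith), ← enorm_eq_nnnorm, Real.enorm_eq_ofReal_abs,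
          ENNReal.toReal_ofReal (abs_nonneg _)] at h2
    have hslope : Tendsto (fun s => |slope (dn n) t s|) (𝓝[≠] t) (𝓝 |deriv (dn n) t|) :=
      (continuous_abs.tendsto _).comp (hasDerivAt_iff_tendsto_slope.1 (ht.1 n).1)
    have hlower := hslope.eventually (eventually_gt_nhds hn)
    filter_upwards [hQ', hlower, self_mem_nhdsWithin] with s h1 h2 hsmem
    have hsne : s ≠ t := hsmem
    have habs : (0:ℝ) < |s - t| := abs_pos.2 (sub_ne_zero.2 hsne)
    -- upper bound
    have hub : dist (γe s) (γe t) / |s - t| ≤ (∫ u in t..s, g u) / (s - t) := by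
      rcases lt_or_gt_of_ne hsne with hlt | hgt
      · -- s < t
        have e1 : ∫ u in t..s, g u = -(∫ u in Ioc s t, g u) := by
          rw [intervalIntegral.integral_symm, intervalIntegral.integral_of_le hlt.le]
        have e2 : dist (γe s) (γe t) ≤ ∫ u in Ioc s t, g u := key2 s t hlt.le
        have e3 : |s - t| = t - s := by
          rw [abs_of_neg (by linarith : s - t < 0)]; ring
        have e4 : (∫ u in t..s, g u) / (s - t) = (∫ u in Ioc s t, g u) / (t - s) := by
          rw [e1, div_eq_div_iff (by linarith : s - t ≠ 0) (by linarith : t - s ≠ 0)]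
          ring
        rw [e3, e4]
        exact (div_le_div_iff_of_pos_right (by linarith : (0:ℝ) < t - s)).2 e2
      · -- t < s
        have e1 : ∫ u in t..s, g u = ∫ u in Ioc t s, g u :=
          intervalIntegral.integral_of_le hgt.le
        have e2 : dist (γe s) (γe t) ≤ ∫ u in Ioc t s, g u := by
          rw [dist_comm]; exact key2 t s hgt.le
        have e3 : |s - t| = s - t := abs_of_pos (by linarith : (0:ℝ) < s - t)
        rw [e1, e3]
        exact (div_le_div_iff_of_pos_right (by linarith : (0:ℝ) < s - t)).2 e2
    -- lower bound
    have hlb : |slope (dn n) t s| ≤ dist (γe s) (γe t) / |s - t| := by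
      rw [slope_def_field, abs_div]
      exact (div_le_div_iff_of_pos_right habs).2 (hdn_diff_le n t s)
    rw [Real.dist_eq] at h1 ⊢
    have h1' := abs_lt.1 h1
    rw [abs_sub_lt_iff]
    constructor
    · linarith [hub]
    · linarith [hlb, h2]
  -- transfer to γ on (0,1)
  have hmain2 : ∀ᵐ t : ℝ ∂volume, t ∈ Ioo (0:ℝ) 1 →
      (Tendsto (fun s => dist (γ s) (γ t) / |s - t|) (𝓝[≠] t) (𝓝 (g t)) ∧
        metricSpeed γ t = g t) := by
    filter_upwards [hmain] with t ht hto
    have hev : (fun s => dist (γ s) (γ t) / |s - t|)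
        =ᶠ[𝓝[≠] t] (fun s => dist (γe s) (γe t) / |s - t|) := by
      have hIoo : Ioo (0:ℝ) 1 ∈ 𝓝 t := isOpen_Ioo.mem_nhds hto
      filter_upwards [nhdsWithin_le_nhds hIoo] with s hs
      rw [hγe_eq s (Ioo_subset_Icc_self hs), hγe_eq t (Ioo_subset_Icc_self hto)]
    have hT : Tendsto (fun s => dist (γ s) (γ t) / |s - t|) (𝓝[≠] t) (𝓝 (g t)) :=
      ht.congr' hev.symm
    refine ⟨hT, ?_⟩
    rw [metricSpeed, dif_pos ⟨g t, hT⟩]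
    exact tendsto_nhds_unique (Exists.choose_spec (⟨g t, hT⟩ :
      ∃ L : ℝ, Tendsto (fun s => dist (γ s) (γ t) / |s - t|) (𝓝[≠] t) (𝓝 L))) hT
  have h_ne1 : ∀ᵐ z : ℝ ∂volume, z ≠ 1 := by
    rw [ae_iff]
    simpa [not_not] using measure_singleton (1:ℝ)
  refine ⟨?_, ?_, ?_, ?_⟩
  · -- existence of the metric speed a.e.
    rw [ae_restrict_iff' measurableSet_Ioo]
    filter_upwards [hmain2] with t h ht
    exact ⟨g t, (h ht).1⟩
  · -- integrability
    rw [integrableOn_Icc_iff_integrableOn_Ioo]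
    apply (hg_int.integrableOn).congr
    rw [EventuallyEq, ae_restrict_iff' measurableSet_Ioo]
    filter_upwards [hmain2] with t h ht
    exact ((h ht).2).symm
  · -- the curve inequality
    intro t s ht hts hs1
    have h1 : dist (γ t) (γ s) = dist (γe t) (γe s) := by
      rw [hγe_eq t ⟨ht, hts.trans hs1⟩, hγe_eq s ⟨ht.trans hts, hs1⟩]
    have h2 : ∫ r in t..s, metricSpeed γ r = ∫ r in t..s, g r := by
      apply intervalIntegral.integral_congr_ae
      filter_upwards [hmain2, h_ne1] with z hz hz1 hzmem
      rw [uIoc_of_le hts] at hzmem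
      have hzIoo : z ∈ Ioo (0:ℝ) 1 :=
        ⟨lt_of_le_of_lt ht hzmem.1, lt_of_le_of_ne (hzmem.2.trans hs1) hz1⟩
      exact (hz hzIoo).2
    rw [h2, h1, intervalIntegral.integral_of_le hts]
    exact key2 t s hts
  · -- minimality
    intro f hf_int hf
    set fi : ℝ → ℝ := (Icc (0:ℝ) 1).indicator f with hfi_def
    have hfi_int : Integrable fi (volume : Measure ℝ) :=
      (integrable_indicator_iff measurableSet_Icc).2 hf_int
    have hLebfi := ms_lebesgue_points hfi_int
    rw [ae_restrict_iff' measurableSet_Ioo]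
    filter_upwards [hmain2, hLebfi] with t hms hQ ht
    have h01 := hms ht
    rw [h01.2]
    have hne : 𝓝[>] t ≤ 𝓝[≠] t := nhdsWithin_mono t fun z hz => ne_of_gt hz
    have l1 : Tendsto (fun s => dist (γ s) (γ t) / |s - t|) (𝓝[>] t) (𝓝 (g t)) :=
      h01.1.mono_left hne
    have l2 : Tendsto (fun s => (∫ u in t..s, fi u) / (s - t)) (𝓝[>] t) (𝓝 (fi t)) :=
      hQ.mono_left hne
    have hfit : fi t = f t := indicator_of_mem (Ioo_subset_Icc_self ht) f
    rw [← hfit]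
    apply le_of_tendsto_of_tendsto l1 l2
    filter_upwards [Ioo_mem_nhdsGT_of_mem (left_mem_Ico.2 ht.2)] with s hs
    have hts : t < s := hs.1
    have h1 : dist (γ s) (γ t) ≤ ∫ u in t..s, f u := by
      rw [dist_comm]
      exact hf t s ht.1.le hts.le hs.2.le
    have h2 : ∫ u in t..s, f u = ∫ u in t..s, fi u := by
      apply intervalIntegral.integral_congr
      intro z hz
      rw [uIcc_of_le hts.le] at hz
      have hz' : z ∈ Icc (0:ℝ) 1 := ⟨ht.1.le.trans hz.1, hz.2.trans hs.2.le⟩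
      simp only [hfi_def]
      rw [indicator_of_mem hz']
    have e3 : |s - t| = s - t := abs_of_pos (by linarith : (0:ℝ) < s - t)
    rw [e3]
    calc dist (γ s) (γ t) / (s - t) ≤ (∫ u in t..s, fi u) / (s - t) := by
          rw [← h2]
          exact (div_le_div_iff_of_pos_right (by linarith : (0:ℝ) < s - t)).2 h1
      _ = (∫ u in t..s, fi u) / (s - t) := rfl
end
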